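/- Low-temperature transcendence criterion: with f̂ = f̄ the uniform mixture of experts f_1,...,f_k, if R(f̂_max) > max_i R(f_i) where f̂_max(·|x) is the uniform distribution on argmax_y f̂(y|x), then there exists τ ∈ (0,1) such that for all τ' with 0 < τ' ≤ τ, the tempered predictor f̂_{τ'}(·|x) = softmax(f̂(·|x); τ') satisfies R(f̂_{τ'}) > max_i R(f_i). -/

import Mathlib

open Finset Filter

/-- Softmax with temperature `τ`. -/
noncomputable def softmax {Y : Type} [Fintype Y] (q : Y → ℝ) (τ : ℝ) (y : Y) : ℝ :=
  Real.exp (q y / τ) / ∑ y', Real.exp (q y' / τ)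

open scoped Classical in
/-- The uniform distribution over the maximizers of `q`. -/
noncomputable def argmaxDist {Y : Type} [Fintype Y] (q : Y → ℝ) (y : Y) : ℝ :=
  if y ∈ Finset.univ.filter (fun y₀ => ∀ y', q y' ≤ q y₀) then
    1 / (Finset.univ.filter (fun y₀ => ∀ y', q y' ≤ q y₀)).card
  else 0

/-- Expected reward of a conditional distribution `f` under test distribution `ptest`. -/
noncomputable def reward {X Y : Type} [Fintype X] [Fintype Y]
    (ptest : X → ℝ) (r : X → Y → ℝ) (f : X → Y → ℝ) : ℝ :=
  ∑ x, ptest x * ∑ y, f x y * r x y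

open scoped Classical in
lemma softmax_tendsto_argmaxDist {Y : Type} [Fintype Y] [Nonempty Y] (q : Y → ℝ) (y : Y) :
    Tendsto (fun τ => softmax q τ y) (nhdsWithin 0 (Set.Ioi 0)) (nhds (argmaxDist q y)) := by
  obtain ⟨y₀, -, hy₀⟩ := Finset.exists_max_image Finset.univ q ⟨Classical.arbitrary Y, mem_univ _⟩
  set M := q y₀ with hMdef
  have hM : ∀ y', q y' ≤ M := fun y' => hy₀ y' (mem_univ _)
  -- each shifted exponential term tends to an indicator
  have hterm : ∀ y' : Y, Tendsto (fun τ => Real.exp ((q y' - M) / τ)) (nhdsWithin 0 (Set.Ioi 0))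
      (nhds (if q y' = M then 1 else 0)) := by
    intro y'
    by_cases h : q y' = M
    · simp only [h, sub_self, if_pos, zero_div, Real.exp_zero]
      exact tendsto_const_nhds
    · rw [if_neg h]
      have hlt : q y' - M < 0 := sub_neg.mpr (lt_of_le_of_ne (hM y') h)
      have h1 : Tendsto (fun τ : ℝ => (q y' - M) / τ) (nhdsWithin 0 (Set.Ioi 0)) atBot := by
        simpa [div_eq_mul_inv] using
          (tendsto_const_mul_atBot_of_neg hlt).mpr tendsto_inv_nhdsGT_zero
      exact Real.tendsto_exp_atBot.comp h1
  -- the argmax set coincides with the level set of M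
  have hset : (Finset.univ.filter (fun y₀' => ∀ y', q y' ≤ q y₀')) =
      Finset.univ.filter (fun y₀' => q y₀' = M) := by
    ext z
    simp only [Finset.mem_filter, Finset.mem_univ, true_and]
    constructor
    · intro hz; exact le_antisymm (hM z) (hz y₀)
    · intro hz y'; rw [hz]; exact hM y'
  set S := Finset.univ.filter (fun y₀' : Y => q y₀' = M) with hS
  have hcard : 0 < (S.card : ℝ) := by
    have : y₀ ∈ S := by simp [hS, hMdef]
    exact_mod_cast Finset.card_pos.mpr ⟨y₀, this⟩
  -- denominator tends to card S
  have hden : Tendsto (fun τ => ∑ y', Real.exp ((q y' - M) / τ)) (nhdsWithin 0 (Set.Ioi 0))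
      (nhds (S.card : ℝ)) := by
    have := tendsto_finset_sum Finset.univ (fun y' _ => hterm y')
    convert this using 2
    rw [hS, Finset.card_filter]
    push_cast
    exact Finset.sum_congr rfl (fun z _ => by by_cases h : q z = M <;> simp [h]) |>.symm
  -- quotient tends to argmaxDist
  have hlim : Tendsto (fun τ => Real.exp ((q y - M) / τ) / ∑ y', Real.exp ((q y' - M) / τ))
      (nhdsWithin 0 (Set.Ioi 0)) (nhds (argmaxDist q y)) := by
    have := (hterm y).div hden (ne_of_gt hcard)
    convert this using 1
    · rfl
    rw [argmaxDist, hset]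
    by_cases h : q y = M <;> simp [h, hS, one_div]
  -- softmax equals the shifted quotient on positive τ
  refine hlim.congr' ?_
  filter_upwards [self_mem_nhdsWithin] with τ (hτ : 0 < τ)
  have hexp : ∀ y' : Y, Real.exp (q y' / τ) = Real.exp ((q y' - M) / τ) * Real.exp (M / τ) := by
    intro y'
    rw [← Real.exp_add, ← add_div, sub_add_cancel]
  have hsum : (∑ y', Real.exp (q y' / τ)) =
      (∑ y', Real.exp ((q y' - M) / τ)) * Real.exp (M / τ) := by
    rw [Finset.sum_mul]
    exact Finset.sum_congr rfl fun z _ => hexp z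
  rw [softmax, hexp y, hsum, mul_div_mul_right _ _ (ne_of_gt (Real.exp_pos _))]

/-- Low-temperature transcendence criterion: if the argmax predictor of the uniform mixture
`f̂` beats every expert, then there is a temperature `τ ∈ (0,1)` such that for every
`τ' ∈ (0, τ]` the tempered predictor `f̂_{τ'}` beats every expert. -/
theorem transcendence_of_argmax_reward_gt {X Y : Type}
    [Fintype X] [Nonempty X] [Fintype Y] [Nonempty Y] {k : ℕ} (hk : 0 < k)
    (f : Fin k → X → Y → ℝ)
    (hf0 : ∀ i x y, 0 ≤ f i x y) (hf1 : ∀ i x, ∑ y, f i x y = 1)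
    (ptest : X → ℝ) (hp0 : ∀ x, 0 ≤ ptest x) (hp1 : ∑ x, ptest x = 1)
    (r : X → Y → ℝ)
    (fhat : X → Y → ℝ) (hfhat : ∀ x y, fhat x y = (1 / (k : ℝ)) * ∑ i, f i x y)
    (hgt : reward ptest r (fun x => argmaxDist (fhat x))
      > Finset.univ.sup' ⟨⟨0, hk⟩, Finset.mem_univ _⟩ (fun i => reward ptest r (f i))) :
    ∃ τ : ℝ, τ ∈ Set.Ioo (0 : ℝ) 1 ∧ ∀ τ' : ℝ, 0 < τ' → τ' ≤ τ →
      reward ptest r (fun x => softmax (fhat x) τ')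
        > Finset.univ.sup' ⟨⟨0, hk⟩, Finset.mem_univ _⟩ (fun i => reward ptest r (f i)) := by
  set c := Finset.univ.sup' ⟨⟨0, hk⟩, Finset.mem_univ _⟩ (fun i => reward ptest r (f i)) with hc
  have hrew : Tendsto (fun τ' => reward ptest r (fun x => softmax (fhat x) τ'))
      (nhdsWithin 0 (Set.Ioi 0)) (nhds (reward ptest r (fun x => argmaxDist (fhat x)))) := by
    unfold reward
    refine tendsto_finset_sum _ (fun x _ => Tendsto.const_mul _ ?_)
    exact tendsto_finset_sum _ (fun y _ =>
      (softmax_tendsto_argmaxDist (fhat x) y).mul_const _)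
  have hev : ∀ᶠ τ' in nhdsWithin 0 (Set.Ioi 0),
      reward ptest r (fun x => softmax (fhat x) τ') > c :=
    hrew.eventually (eventually_gt_nhds hgt)
  rw [eventually_iff, mem_nhdsGT_iff_exists_Ioc_subset] at hev
  obtain ⟨b, hb, hsub⟩ := hev
  refine ⟨min b (1/2), ⟨lt_min hb (by norm_num), lt_of_le_of_lt (min_le_right _ _) (by norm_num)⟩,
    fun τ' h0 hle => ?_⟩
  exact hsub ⟨h0, hle.trans (min_le_left _ _)⟩
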